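/- Let 𝕊 be a K×K {0,1}-matrix each of whose rows contains at least one entry 1, and S_1, …, S_K ∈ ℝ^{d×d}, with Kozyakin 𝕊-lift S^{(1)}, …, S^{(K)} ∈ ℝ^{Kd×Kd}. If a word (i_0, …, i_{n-1}) ∈ {1,…,K}^n with n ≥ 2 is not 𝕊-admissible (i.e. s_{i_k i_{k+1}} = 0 for some 0 ≤ k ≤ n−2), then S^{(i_0)} ⋯ S^{(i_{n-1})} = 0, the zero matrix in ℝ^{Kd×Kd}. -/

import Mathlib

open MeasureTheory Filter Matrix
open scoped Kronecker

/-- The ℓ²-operator norm of a real square matrix. -/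
noncomputable def l2OpNorm {ι : Type*} [Fintype ι] [DecidableEq ι]
    (A : Matrix ι ι ℝ) : ℝ :=
  ‖Matrix.toEuclideanCLM (𝕜 := ℝ) A‖

/-- The spectral radius of a real square matrix: the maximum of the absolute values
of its (complex) eigenvalues. -/
noncomputable def specRad {ι : Type*} [Fintype ι] [DecidableEq ι]
    (A : Matrix ι ι ℝ) : ℝ :=
  (spectralRadius ℂ (A.map (fun x => (x : ℂ)))).toReal

/-- The ordered product `S_{w 0} * S_{w 1} * ⋯ * S_{w (n-1)}`. -/
noncomputable def wordProd {K : ℕ} {ι : Type*} [Fintype ι] [DecidableEq ι]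
    (S : Fin K → Matrix ι ι ℝ) (n : ℕ) (w : ℕ → Fin K) : Matrix ι ι ℝ :=
  (List.ofFn fun k : Fin n => S (w k)).prod

/-- The word `(w 0, …, w (n-1))` is `𝕊`-admissible. -/
def Admissible {K : ℕ} (𝕊 : Matrix (Fin K) (Fin K) ℝ) (n : ℕ) (w : ℕ → Fin K) : Prop :=
  ∀ k, k + 1 < n → 𝕊 (w k) (w (k + 1)) = 1

/-- The word `(w 0, …, w (n-1))` is `𝕊`-periodically extendable. -/
def PerExt {K : ℕ} (𝕊 : Matrix (Fin K) (Fin K) ℝ) (n : ℕ) (w : ℕ → Fin K) : Prop :=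
  Admissible 𝕊 n w ∧ 𝕊 (w (n - 1)) (w 0) = 1

/-- The Kozyakin `𝕊`-lift `S^{(k)} = (δ_kᵀ 𝕊_k) ⊗ S_k`. -/
noncomputable def kozLift {K d : ℕ} (𝕊 : Matrix (Fin K) (Fin K) ℝ)
    (S : Fin K → Matrix (Fin d) (Fin d) ℝ) (k : Fin K) :
    Matrix (Fin K × Fin d) (Fin K × Fin d) ℝ :=
  (Matrix.vecMulVec (Pi.single k 1) (𝕊 k)) ⊗ₖ S k

lemma kozLift_mul_zero {K d : ℕ} (𝕊 : Matrix (Fin K) (Fin K) ℝ)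
    (S : Fin K → Matrix (Fin d) (Fin d) ℝ) (i j : Fin K) (h : 𝕊 i j = 0) :
    kozLift 𝕊 S i * kozLift 𝕊 S j = 0 := by
  unfold kozLift
  rw [← Matrix.mul_kronecker_mul]
  have : Matrix.vecMulVec (Pi.single i (1:ℝ)) (𝕊 i) * Matrix.vecMulVec (Pi.single j 1) (𝕊 j) = 0 := by
    ext a b
    simp [Matrix.mul_apply, Matrix.vecMulVec_apply, Pi.single_apply, Finset.mul_sum]
    intro hij
    subst hij
    simp [h]
  rw [this, Matrix.zero_kronecker]

theorem stmt10 {K d : ℕ} (hK : 2 ≤ K) (hd : 1 ≤ d)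
    (S : Fin K → Matrix (Fin d) (Fin d) ℝ)
    (𝕊 : Matrix (Fin K) (Fin K) ℝ) (h01 : ∀ i j, 𝕊 i j = 0 ∨ 𝕊 i j = 1)
    (hrow : ∀ i, ∃ j, 𝕊 i j = 1)
    (n : ℕ) (hn : 2 ≤ n) (w : ℕ → Fin K)
    (hnotadm : ¬ Admissible 𝕊 n w) :
    wordProd (kozLift 𝕊 S) n w = 0 := by
  rw [Admissible] at hnotadm
  push_neg at hnotadm
  obtain ⟨k, hk1, hkne⟩ := hnotadm
  have hk0 : 𝕊 (w k) (w (k + 1)) = 0 := (h01 _ _).resolve_right hkne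
  obtain ⟨m, rfl⟩ : ∃ m, n = k + (2 + m) := ⟨n - (k + 2), by omega⟩
  rw [wordProd, List.ofFn_add, List.ofFn_add, List.prod_append, List.prod_append]
  have : (List.ofFn fun i : Fin 2 =>
      kozLift 𝕊 S (w ((Fin.natAdd k (Fin.castAdd m i) : Fin (k + (2 + m))) : ℕ))).prod = 0 := by
    simp only [List.ofFn_succ, List.ofFn_zero, List.prod_cons, List.prod_nil, mul_one]
    have h0 : ((Fin.natAdd k (Fin.castAdd m (0 : Fin 2)) : Fin (k + (2 + m))) : ℕ) = k := by simp
    have h1 : ((Fin.natAdd k (Fin.castAdd m (Fin.succ 0 : Fin 2)) : Fin (k + (2 + m))) : ℕ) = k + 1 := by simp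
    rw [h0, h1, kozLift_mul_zero _ _ _ _ hk0]
  rw [show (List.ofFn fun i : Fin 2 =>
      kozLift 𝕊 S (w ((Fin.natAdd k (Fin.castLE (Nat.le_add_right 2 m) i) : Fin (k + (2 + m))) : ℕ))).prod = 0 from this, zero_mul, mul_zero]
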